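/- (Theorem 2.1, additional part) In the generalized matrix ring setting, if φ : R → R is an additive map satisfying condition (P) and φ(1) = 0, then φ is a Jordan derivation: φ(U²) = φ(U)·U + U·φ(U) for every U ∈ R. -/
import Mathlib

private lemma mw {R : Type*} [Ring R] {x y w : R} (h : x * y = w) (z : R) :
    x * (y * z) = w * z := by rw [← mul_assoc, h]

private lemma mw2 {R : Type*} [Ring R] {x y : R} (h : x * y = 0) (z : R) :
    x * (y * z) = 0 := by rw [← mul_assoc, h, zero_mul]

private lemma mw3 {R : Type*} [Ring R] {x t p : R} (h : x * (t * p) = 0) (z : R) :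
    x * (t * (p * z)) = 0 := by
  have hb : x * (t * (p * z)) = (x * (t * p)) * z := by noncomm_ring
  rw [hb, h, zero_mul]

private lemma jacketL {R : Type*} [Ring R] {p q a : R} (hp : p * p = p) (ha : a = p * a * q) :
    p * a = a := by nth_rewrite 1 [ha]; rw [← mul_assoc, ← mul_assoc, hp, ← ha]

private lemma jacketR {R : Type*} [Ring R] {p q a : R} (hq : q * q = q) (ha : a = p * a * q) :
    a * q = a := by nth_rewrite 1 [ha]; rw [mul_assoc, hq, ← ha]

private lemma jacketL0 {R : Type*} [Ring R] {p p' q a : R} (h : p' * p = 0) (ha : a = p * a * q) :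
    p' * a = 0 := by nth_rewrite 1 [ha]; rw [← mul_assoc, ← mul_assoc, h, zero_mul, zero_mul]

private lemma jacketR0 {R : Type*} [Ring R] {p q q' a : R} (h : q * q' = 0) (ha : a = p * a * q) :
    a * q' = 0 := by nth_rewrite 1 [ha]; rw [mul_assoc, h, mul_zero]

private lemma jmul {R : Type*} [Ring R] {p q x y : R} (hx : p * x = x) (hy : y * q = y) :
    x * y = p * (x * y) * q := by
  have h : p * (x * y) * q = (p * x) * (y * q) := by noncomm_ring
  rw [h, hx, hy]

private lemma mm0 {R : Type*} [Ring R] {p q x y : R} (hx : x * p = x) (hy : q * y = y)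
    (hpq : p * q = 0) : x * y = 0 := by
  have h : x * y = (x * p) * (q * y) := by rw [hx, hy]
  rw [h, mul_assoc, ← mul_assoc p, hpq, zero_mul, mul_zero]

private lemma addz {M : Type*} [AddGroup M] {x y : M} (hx : x = 0) (hy : y = 0) :
    x + y = 0 := by rw [hx, hy, add_zero]

private lemma subz {M : Type*} [AddGroup M] {x y : M} (hx : x = 0) (hy : y = 0) :
    x - y = 0 := by rw [hx, hy, sub_zero]

private lemma zl1 {R : Type*} [Ring R] {u p w : R} (hu : u * p = u) (h : p * w = 0) :
    u * w = 0 := by rw [← hu, mul_assoc, h, mul_zero]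

private lemma zr1 {R : Type*} [Ring R] {x t p u : R} (ha : ∀ z, x * (t * (p * z)) = 0)
    (hu : p * u = u) : x * (t * u) = 0 := by
  have hb : x * (t * u) = x * (t * (p * u)) := by rw [hu]
  rw [hb]; exact ha u

private lemma zr2 {R : Type*} [Ring R] {x t p u : R} (ha : ∀ z, x * (t * (p * z)) = 0)
    (hu : p * u = u) (z : R) : x * (t * (u * z)) = 0 := by
  have hb : x * (t * (u * z)) = x * (t * (p * (u * z))) := by rw [mw hu]
  rw [hb]; exact ha _

set_option maxHeartbeats 2000000 in
theorem phi_is_jordan_derivation_if_unital_vanishing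
    {R : Type*} [Ring R] (e : R) (he : e * e = e)
    (h2A : ∀ x : R, e * x * e + e * x * e = 0 → e * x * e = 0)
    (h2B : ∀ x : R, (1 - e) * x * (1 - e) + (1 - e) * x * (1 - e) = 0 →
      (1 - e) * x * (1 - e) = 0)
    (hlf : ∀ a : R, a = e * a * e → (∀ x : R, a * (e * x * (1 - e)) = 0) → a = 0)
    (hrf : ∀ b : R, b = (1 - e) * b * (1 - e) → (∀ x : R, (e * x * (1 - e)) * b = 0) → b = 0)
    (φ : R →+ R)
    (hP : ∀ U V : R, U * V = 0 → V * U = 0 →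
      φ U * V + V * φ U + U * φ V + φ V * U = 0)
    (h1 : φ 1 = 0) :
    ∀ U : R, φ (U * U) = φ U * U + U * φ U := by
  obtain ⟨f, hf⟩ : ∃ f', f' = 1 - e := ⟨_, rfl⟩
  rw [← hf] at h2B hlf hrf
  have hef : e * f = 0 := by rw [hf, mul_sub, mul_one, he, sub_self]
  have hfe : f * e = 0 := by rw [hf, sub_mul, one_mul, he, sub_self]
  have hff : f * f = f := by rw [hf, sub_mul, one_mul, mul_sub, mul_one, he, sub_self, sub_zero]
  have hefo : e + f = 1 := by rw [hf]; abel
  clear hf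
  have dec : ∀ x : R, x = e * (x * e) + e * (x * f) + f * (x * e) + f * (x * f) := by
    intro x
    have h : (e + f) * (x * (e + f)) = x := by rw [hefo, mul_one, one_mul]
    conv_lhs => rw [← h]
    simp only [mul_add, add_mul]
    abel
  have tA0 : ∀ x : R, e * (x * e) + e * (x * e) = 0 → e * (x * e) = 0 := by
    intro x hx
    rw [← mul_assoc] at hx
    have h := h2A x hx
    rw [mul_assoc] at h
    exact h
  have tB0 : ∀ x : R, f * (x * f) + f * (x * f) = 0 → f * (x * f) = 0 := by
    intro x hx
    rw [← mul_assoc] at hx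
    have h := h2B x hx
    rw [mul_assoc] at h
    exact h
  have tA1 : ∀ t : R, e * (t * e) = t → t + t = 0 → t = 0 := by
    intro t ht h
    have h' := tA0 t (by rw [ht]; exact h)
    rw [ht] at h'
    exact h'
  have tB1 : ∀ t : R, f * (t * f) = t → t + t = 0 → t = 0 := by
    intro t ht h
    have h' := tB0 t (by rw [ht]; exact h)
    rw [ht] at h'
    exact h'
  have tA2 : ∀ t : R, e * (t * e) = t → (t + t) + (t + t) = 0 → t = 0 := by
    intro t ht h
    refine tA1 t ht (tA1 (t + t) ?_ h)
    simp only [mul_add, add_mul, ht]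
  have tB2 : ∀ t : R, f * (t * f) = t → (t + t) + (t + t) = 0 → t = 0 := by
    intro t ht h
    refine tB1 t ht (tB1 (t + t) ?_ h)
    simp only [mul_add, add_mul, ht]
  -- main lemma for normalized maps
  have main : ∀ ψ : R → R, (∀ x y, ψ (x + y) = ψ x + ψ y) →
      (∀ U V : R, U * V = 0 → V * U = 0 → ψ U * V + V * ψ U + U * ψ V + ψ V * U = 0) →
      ψ 1 = 0 → ψ e = 0 → ∀ U, ψ (U * U) = ψ U * U + U * ψ U := by
    intro ψ hadd hPψ hψ1 hψe
    have hψ0 : ψ 0 = 0 := by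
      have h := hadd 0 0
      rw [add_zero] at h
      exact left_eq_add.mp h
    have hψneg : ∀ x, ψ (-x) = - ψ x := by
      intro x
      have h := hadd x (-x)
      rw [add_neg_cancel, hψ0] at h
      exact (neg_eq_of_add_eq_zero_right h.symm).symm
    have hψsub : ∀ x y, ψ (x - y) = ψ x - ψ y := by
      intro x y
      rw [sub_eq_add_neg, hadd, hψneg, ← sub_eq_add_neg]
    have hψf : ψ f = 0 := by
      have h := hadd e f
      rw [hefo, hψ1, hψe, zero_add] at h
      exact h.symm
    -- corner lemma A
    have hA : ∀ a, a = e * a * e → ψ a = e * ψ a * e := by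
      intro a ha
      have haf : a * f = 0 := jacketR0 hef ha
      have hfa : f * a = 0 := jacketL0 hfe ha
      have E := hPψ a f haf hfa
      rw [hψf, mul_zero, zero_mul, add_zero, add_zero] at E
      have c1 : f * (ψ a * f) = 0 := by
        have h := congrArg (fun z => f * z * f) E
        simp only [mul_add, add_mul, mul_sub, sub_mul, neg_mul, mul_neg, neg_neg, mul_assoc, mul_zero, zero_mul, add_zero, zero_add, neg_zero, sub_zero, zero_sub, mul_one, one_mul, he, hef, hfe, hff, mw he, mw hef, mw hfe, mw hff] at h
        exact tB0 _ h
      have c2 : e * (ψ a * f) = 0 := by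
        have h := congrArg (fun z => e * z * f) E
        simp only [mul_add, add_mul, mul_sub, sub_mul, neg_mul, mul_neg, neg_neg, mul_assoc, mul_zero, zero_mul, add_zero, zero_add, neg_zero, sub_zero, zero_sub, mul_one, one_mul, he, hef, hfe, hff, mw he, mw hef, mw hfe, mw hff] at h
        exact h
      have c3 : f * (ψ a * e) = 0 := by
        have h := congrArg (fun z => f * z * e) E
        simp only [mul_add, add_mul, mul_sub, sub_mul, neg_mul, mul_neg, neg_neg, mul_assoc, mul_zero, zero_mul, add_zero, zero_add, neg_zero, sub_zero, zero_sub, mul_one, one_mul, he, hef, hfe, hff, mw he, mw hef, mw hfe, mw hff] at h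
        exact h
      conv_lhs => rw [dec (ψ a)]
      rw [c1, c2, c3, add_zero, add_zero, add_zero, ← mul_assoc]
    -- corner lemma B
    have hB : ∀ b, b = f * b * f → ψ b = f * ψ b * f := by
      intro b hb
      have heb : e * b = 0 := jacketL0 hef hb
      have hbe : b * e = 0 := jacketR0 hfe hb
      have E := hPψ e b heb hbe
      rw [hψe, mul_zero, zero_mul, zero_add, zero_add] at E
      have c1 : e * (ψ b * e) = 0 := by
        have h := congrArg (fun z => e * z * e) E
        simp only [mul_add, add_mul, mul_sub, sub_mul, neg_mul, mul_neg, neg_neg, mul_assoc, mul_zero, zero_mul, add_zero, zero_add, neg_zero, sub_zero, zero_sub, mul_one, one_mul, he, hef, hfe, hff, mw he, mw hef, mw hfe, mw hff] at h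
        exact tA0 _ h
      have c2 : e * (ψ b * f) = 0 := by
        have h := congrArg (fun z => e * z * f) E
        simp only [mul_add, add_mul, mul_sub, sub_mul, neg_mul, mul_neg, neg_neg, mul_assoc, mul_zero, zero_mul, add_zero, zero_add, neg_zero, sub_zero, zero_sub, mul_one, one_mul, he, hef, hfe, hff, mw he, mw hef, mw hfe, mw hff] at h
        exact h
      have c3 : f * (ψ b * e) = 0 := by
        have h := congrArg (fun z => f * z * e) E
        simp only [mul_add, add_mul, mul_sub, sub_mul, neg_mul, mul_neg, neg_neg, mul_assoc, mul_zero, zero_mul, add_zero, zero_add, neg_zero, sub_zero, zero_sub, mul_one, one_mul, he, hef, hfe, hff, mw he, mw hef, mw hfe, mw hff] at h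
        exact h
      conv_lhs => rw [dec (ψ b)]
      rw [c1, c2, c3, add_zero, zero_add, zero_add, ← mul_assoc]
    -- M-type lemmas pack
    have hM : ∀ m, m = e * m * f →
        (ψ m = e * (ψ m * f) + f * (ψ m * e)) ∧ (e * (ψ m * e) = 0) ∧ (f * (ψ m * f) = 0)
        ∧ (m * ψ m = 0) ∧ (ψ m * m = 0) := by
      intro m hm
      have hem : e * m = m := jacketL he hm
      have hmf : m * f = m := jacketR hff hm
      have hme : m * e = 0 := jacketR0 hfe hm
      have hfm : f * m = 0 := jacketL0 hfe hm
      have hmm : m * m = 0 := mm0 hmf hem hfe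
      have r1 : ψ (e - m) = - ψ m := by rw [hψsub, hψe, zero_sub]
      have r2 : ψ (f + m) = ψ m := by rw [hadd, hψf, zero_add]
      have r3 : ψ (e + m) = ψ m := by rw [hadd, hψe, zero_add]
      have r4 : ψ (f - m) = - ψ m := by rw [hψsub, hψf, zero_sub]
      have p1 : (e - m) * (f + m) = 0 := by
        simp only [mul_add, add_mul, mul_sub, sub_mul, neg_mul, mul_neg, neg_neg, mul_assoc, mul_zero, zero_mul, add_zero, zero_add, neg_zero, sub_zero, zero_sub, mul_one, one_mul, he, hef, hfe, hff, mw he, mw hef, mw hfe, mw hff, hem, hmf, hme, hfm, hmm, mw hem, mw hmf, mw hme, mw hfm, mw2 hmm]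
        try abel
      have p2 : (f + m) * (e - m) = 0 := by
        simp only [mul_add, add_mul, mul_sub, sub_mul, neg_mul, mul_neg, neg_neg, mul_assoc, mul_zero, zero_mul, add_zero, zero_add, neg_zero, sub_zero, zero_sub, mul_one, one_mul, he, hef, hfe, hff, mw he, mw hef, mw hfe, mw hff, hem, hmf, hme, hfm, hmm, mw hem, mw hmf, mw hme, mw hfm, mw2 hmm]
        try abel
      have p3 : (e + m) * (f - m) = 0 := by
        simp only [mul_add, add_mul, mul_sub, sub_mul, neg_mul, mul_neg, neg_neg, mul_assoc, mul_zero, zero_mul, add_zero, zero_add, neg_zero, sub_zero, zero_sub, mul_one, one_mul, he, hef, hfe, hff, mw he, mw hef, mw hfe, mw hff, hem, hmf, hme, hfm, hmm, mw hem, mw hmf, mw hme, mw hfm, mw2 hmm]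
        try abel
      have p4 : (f - m) * (e + m) = 0 := by
        simp only [mul_add, add_mul, mul_sub, sub_mul, neg_mul, mul_neg, neg_neg, mul_assoc, mul_zero, zero_mul, add_zero, zero_add, neg_zero, sub_zero, zero_sub, mul_one, one_mul, he, hef, hfe, hff, mw he, mw hef, mw hfe, mw hff, hem, hmf, hme, hfm, hmm, mw hem, mw hmf, mw hme, mw hfm, mw2 hmm]
        try abel
      have E1 := hPψ (e - m) (f + m) p1 p2
      rw [r1, r2] at E1
      have E2 := hPψ (e + m) (f - m) p3 p4
      rw [r3, r4] at E2
      have s1 := congrArg (fun z => e * z * e) E1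
      have s2 := congrArg (fun z => e * z * e) E2
      simp only [mul_add, add_mul, mul_sub, sub_mul, neg_mul, mul_neg, neg_neg, mul_assoc, mul_zero, zero_mul, add_zero, zero_add, neg_zero, sub_zero, zero_sub, mul_one, one_mul, he, hef, hfe, hff, mw he, mw hef, mw hfe, mw hff, hem, hmf, hme, hfm, hmm, mw hem, mw hmf, mw hme, mw hfm, mw2 hmm] at s1 s2
      have hb4 : (m * (ψ m * e) + m * (ψ m * e)) + (m * (ψ m * e) + m * (ψ m * e)) = 0 := by
        have hc := addz s1 s2
        rw [← neg_eq_zero, ← hc]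
        abel
      have hb0 : m * (ψ m * e) = 0 :=
        tA2 _ (by simp only [mul_assoc, he, mw hem]) hb4
      have ha4 : (e * (ψ m * e) + e * (ψ m * e)) + (e * (ψ m * e) + e * (ψ m * e)) = 0 := by
        have hc := subz s1 s2
        rw [← hc]
        abel
      have de : e * (ψ m * e) = 0 :=
        tA2 _ (by simp only [mul_assoc, he, mw he]) ha4
      have s3 := congrArg (fun z => f * z * f) E1
      have s4 := congrArg (fun z => f * z * f) E2
      simp only [mul_add, add_mul, mul_sub, sub_mul, neg_mul, mul_neg, neg_neg, mul_assoc, mul_zero, zero_mul, add_zero, zero_add, neg_zero, sub_zero, zero_sub, mul_one, one_mul, he, hef, hfe, hff, mw he, mw hef, mw hfe, mw hff, hem, hmf, hme, hfm, hmm, mw hem, mw hmf, mw hme, mw hfm, mw2 hmm] at s3 s4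
      have hd4 : (f * (ψ m * m) + f * (ψ m * m)) + (f * (ψ m * m) + f * (ψ m * m)) = 0 := by
        have hc := addz s3 s4
        rw [← neg_eq_zero, ← hc]
        abel
      have dd : f * (ψ m * m) = 0 :=
        tB2 _ (by simp only [mul_assoc, hmf, mw hff]) hd4
      have hc4 : (f * (ψ m * f) + f * (ψ m * f)) + (f * (ψ m * f) + f * (ψ m * f)) = 0 := by
        have hc := subz s4 s3
        rw [← hc]
        abel
      have df : f * (ψ m * f) = 0 :=
        tB2 _ (by simp only [mul_assoc, hff, mw hff]) hc4
      have decomp : ψ m = e * (ψ m * f) + f * (ψ m * e) := by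
        conv_lhs => rw [dec (ψ m)]
        rw [de, df, zero_add, add_zero]
      have hMz : m * ψ m = 0 := by
        conv_lhs => rw [decomp]
        simp only [mul_add, add_mul, mul_sub, sub_mul, neg_mul, mul_neg, neg_neg, mul_assoc, mul_zero, zero_mul, add_zero, zero_add, neg_zero, sub_zero, zero_sub, mul_one, one_mul, he, hef, hfe, hff, mw he, mw hef, mw hfe, mw hff, hem, hmf, hme, hfm, mw hem, mw hmf, mw hme, mw hfm, hb0]
      have hMz' : ψ m * m = 0 := by
        conv_lhs => rw [decomp]
        simp only [mul_add, add_mul, mul_sub, sub_mul, neg_mul, mul_neg, neg_neg, mul_assoc, mul_zero, zero_mul, add_zero, zero_add, neg_zero, sub_zero, zero_sub, mul_one, one_mul, he, hef, hfe, hff, mw he, mw hef, mw hfe, mw hff, hem, hmf, hme, hfm, mw hem, mw hmf, mw hme, mw hfm, dd]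
      exact ⟨decomp, de, df, hMz, hMz'⟩
    -- N-type lemmas pack
    have hN : ∀ n, n = f * n * e →
        (ψ n = e * (ψ n * f) + f * (ψ n * e)) ∧ (e * (ψ n * e) = 0) ∧ (f * (ψ n * f) = 0)
        ∧ (n * ψ n = 0) ∧ (ψ n * n = 0) := by
      intro n hn
      have hfn : f * n = n := jacketL hff hn
      have hne : n * e = n := jacketR he hn
      have hnf : n * f = 0 := jacketR0 hef hn
      have hen : e * n = 0 := jacketL0 hef hn
      have hnn : n * n = 0 := mm0 hne hfn hef
      have r1 : ψ (f - n) = - ψ n := by rw [hψsub, hψf, zero_sub]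
      have r2 : ψ (e + n) = ψ n := by rw [hadd, hψe, zero_add]
      have r3 : ψ (f + n) = ψ n := by rw [hadd, hψf, zero_add]
      have r4 : ψ (e - n) = - ψ n := by rw [hψsub, hψe, zero_sub]
      have p1 : (f - n) * (e + n) = 0 := by
        simp only [mul_add, add_mul, mul_sub, sub_mul, neg_mul, mul_neg, neg_neg, mul_assoc, mul_zero, zero_mul, add_zero, zero_add, neg_zero, sub_zero, zero_sub, mul_one, one_mul, he, hef, hfe, hff, mw he, mw hef, mw hfe, mw hff, hfn, hne, hnf, hen, hnn, mw hfn, mw hne, mw hnf, mw hen, mw2 hnn]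
        try abel
      have p2 : (e + n) * (f - n) = 0 := by
        simp only [mul_add, add_mul, mul_sub, sub_mul, neg_mul, mul_neg, neg_neg, mul_assoc, mul_zero, zero_mul, add_zero, zero_add, neg_zero, sub_zero, zero_sub, mul_one, one_mul, he, hef, hfe, hff, mw he, mw hef, mw hfe, mw hff, hfn, hne, hnf, hen, hnn, mw hfn, mw hne, mw hnf, mw hen, mw2 hnn]
        try abel
      have p3 : (f + n) * (e - n) = 0 := by
        simp only [mul_add, add_mul, mul_sub, sub_mul, neg_mul, mul_neg, neg_neg, mul_assoc, mul_zero, zero_mul, add_zero, zero_add, neg_zero, sub_zero, zero_sub, mul_one, one_mul, he, hef, hfe, hff, mw he, mw hef, mw hfe, mw hff, hfn, hne, hnf, hen, hnn, mw hfn, mw hne, mw hnf, mw hen, mw2 hnn]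
        try abel
      have p4 : (e - n) * (f + n) = 0 := by
        simp only [mul_add, add_mul, mul_sub, sub_mul, neg_mul, mul_neg, neg_neg, mul_assoc, mul_zero, zero_mul, add_zero, zero_add, neg_zero, sub_zero, zero_sub, mul_one, one_mul, he, hef, hfe, hff, mw he, mw hef, mw hfe, mw hff, hfn, hne, hnf, hen, hnn, mw hfn, mw hne, mw hnf, mw hen, mw2 hnn]
        try abel
      have E1 := hPψ (f - n) (e + n) p1 p2
      rw [r1, r2] at E1
      have E2 := hPψ (f + n) (e - n) p3 p4
      rw [r3, r4] at E2
      have s1 := congrArg (fun z => f * z * f) E1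
      have s2 := congrArg (fun z => f * z * f) E2
      simp only [mul_add, add_mul, mul_sub, sub_mul, neg_mul, mul_neg, neg_neg, mul_assoc, mul_zero, zero_mul, add_zero, zero_add, neg_zero, sub_zero, zero_sub, mul_one, one_mul, he, hef, hfe, hff, mw he, mw hef, mw hfe, mw hff, hfn, hne, hnf, hen, hnn, mw hfn, mw hne, mw hnf, mw hen, mw2 hnn] at s1 s2
      have hb4 : (n * (ψ n * f) + n * (ψ n * f)) + (n * (ψ n * f) + n * (ψ n * f)) = 0 := by
        have hc := addz s1 s2
        rw [← neg_eq_zero, ← hc]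
        abel
      have hb0 : n * (ψ n * f) = 0 :=
        tB2 _ (by simp only [mul_assoc, hff, mw hfn]) hb4
      have df : f * (ψ n * f) = 0 := by
        have ha4 : (f * (ψ n * f) + f * (ψ n * f)) + (f * (ψ n * f) + f * (ψ n * f)) = 0 := by
          have hc := subz s1 s2
          rw [← hc]
          abel
        exact tB2 _ (by simp only [mul_assoc, hff, mw hff]) ha4
      have s3 := congrArg (fun z => e * z * e) E1
      have s4 := congrArg (fun z => e * z * e) E2
      simp only [mul_add, add_mul, mul_sub, sub_mul, neg_mul, mul_neg, neg_neg, mul_assoc, mul_zero, zero_mul, add_zero, zero_add, neg_zero, sub_zero, zero_sub, mul_one, one_mul, he, hef, hfe, hff, mw he, mw hef, mw hfe, mw hff, hfn, hne, hnf, hen, hnn, mw hfn, mw hne, mw hnf, mw hen, mw2 hnn] at s3 s4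
      have dd : e * (ψ n * n) = 0 := by
        have hd4 : (e * (ψ n * n) + e * (ψ n * n)) + (e * (ψ n * n) + e * (ψ n * n)) = 0 := by
          have hc := addz s3 s4
          rw [← neg_eq_zero, ← hc]
          abel
        exact tA2 _ (by simp only [mul_assoc, hne, mw he]) hd4
      have de : e * (ψ n * e) = 0 := by
        have hc4 : (e * (ψ n * e) + e * (ψ n * e)) + (e * (ψ n * e) + e * (ψ n * e)) = 0 := by
          have hc := subz s4 s3
          rw [← hc]
          abel
        exact tA2 _ (by simp only [mul_assoc, he, mw he]) hc4
      have decomp : ψ n = e * (ψ n * f) + f * (ψ n * e) := by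
        conv_lhs => rw [dec (ψ n)]
        rw [de, df, zero_add, add_zero]
      have hNz : n * ψ n = 0 := by
        conv_lhs => rw [decomp]
        simp only [mul_add, add_mul, mul_sub, sub_mul, neg_mul, mul_neg, neg_neg, mul_assoc, mul_zero, zero_mul, add_zero, zero_add, neg_zero, sub_zero, zero_sub, mul_one, one_mul, he, hef, hfe, hff, mw he, mw hef, mw hfe, mw hff, hfn, hne, hnf, hen, mw hfn, mw hne, mw hnf, mw hen, hb0]
      have hNz' : ψ n * n = 0 := by
        conv_lhs => rw [decomp]
        simp only [mul_add, add_mul, mul_sub, sub_mul, neg_mul, mul_neg, neg_neg, mul_assoc, mul_zero, zero_mul, add_zero, zero_add, neg_zero, sub_zero, zero_sub, mul_one, one_mul, he, hef, hfe, hff, mw he, mw hef, mw hfe, mw hff, hfn, hne, hnf, hen, mw hfn, mw hne, mw hnf, mw hen, dd]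
      exact ⟨decomp, de, df, hNz, hNz'⟩
    -- product with A on the left : psi(a*m)
    have hAM : ∀ a m, a = e * a * e → m = e * m * f →
        ψ (a * m) = a * (ψ m * f) + ψ a * m + f * (ψ m * a) := by
      intro a m ha hm
      have hea : e * a = a := jacketL he ha
      have hae : a * e = a := jacketR he ha
      have haf : a * f = 0 := jacketR0 hef ha
      have hfa : f * a = 0 := jacketL0 hfe ha
      have hem : e * m = m := jacketL he hm
      have hmf : m * f = m := jacketR hff hm
      have hme : m * e = 0 := jacketR0 hfe hm
      have hfm : f * m = 0 := jacketL0 hfe hm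
      have hmm : m * m = 0 := mm0 hmf hem hfe
      have hma : m * a = 0 := mm0 hmf hea hfe
      have ham : a * m = e * (a * m) * f := jmul hea hmf
      obtain ⟨dm, dem, dfm, hMzm, hMzm'⟩ := hM m hm
      obtain ⟨dam, deam, dfam, hamz, hamz'⟩ := hM (a * m) ham
      have hψa := hA a ha
      have heψa : e * ψ a = ψ a := jacketL he hψa
      have hψae : ψ a * e = ψ a := jacketR he hψa
      have hψaf : ψ a * f = 0 := jacketR0 hef hψa
      have hfψa : f * ψ a = 0 := jacketL0 hfe hψa
      have q1 : e * (ψ m * a) = 0 := zr1 (mw3 dem) hea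
      have q1' : ∀ z, e * (ψ m * (a * z)) = 0 := zr2 (mw3 dem) hea
      have q2 : e * (ψ (a * m) * m) = 0 := zr1 (mw3 deam) hem
      have q2' : ∀ z, e * (ψ (a * m) * (m * z)) = 0 := zr2 (mw3 deam) hem
      have q3 : m * (ψ (a * m) * f) = 0 := zl1 hmf dfam
      have q3' : ∀ z, m * (ψ (a * m) * (f * z)) = 0 := fun z => zl1 hmf (mw3 dfam z)
      have p1 : (f - m) * (a + a * m) = 0 := by
        simp only [mul_add, add_mul, mul_sub, sub_mul, neg_mul, mul_neg, neg_neg, mul_assoc, mul_zero, zero_mul, add_zero, zero_add, neg_zero, sub_zero, zero_sub, mul_one, one_mul, he, hef, hfe, hff, mw he, mw hef, mw hfe, mw hff, hea, hae, haf, hfa, hem, hmf, hme, hfm, hmm, hma,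
          mw hea, mw hae, mw haf, mw hfa, mw hem, mw hmf, mw hme, mw hfm, mw2 hmm, mw2 hma]
        try abel
      have p2 : (a + a * m) * (f - m) = 0 := by
        simp only [mul_add, add_mul, mul_sub, sub_mul, neg_mul, mul_neg, neg_neg, mul_assoc, mul_zero, zero_mul, add_zero, zero_add, neg_zero, sub_zero, zero_sub, mul_one, one_mul, he, hef, hfe, hff, mw he, mw hef, mw hfe, mw hff, hea, hae, haf, hfa, hem, hmf, hme, hfm, hmm, hma,
          mw hea, mw hae, mw haf, mw hfa, mw hem, mw hmf, mw hme, mw hfm, mw2 hmm, mw2 hma]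
        try abel
      have E := hPψ (f - m) (a + a * m) p1 p2
      rw [hψsub, hψf, zero_sub, hadd] at E
      have c12 : e * (ψ (a * m) * f) = a * (ψ m * f) + ψ a * m := by
        have h := congrArg (fun z => e * z * f) E
        simp only [mul_add, add_mul, mul_sub, sub_mul, neg_mul, mul_neg, neg_neg, mul_assoc, mul_zero, zero_mul, add_zero, zero_add, neg_zero, sub_zero, zero_sub, mul_one, one_mul, he, hef, hfe, hff, mw he, mw hef, mw hfe, mw hff, hea, hae, haf, hfa, hem, hmf, hme, hfm, hmm, hma,
          mw hea, mw hae, mw haf, mw hfa, mw hem, mw hmf, mw hme, mw hfm, mw2 hmm, mw2 hma,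
          heψa, hψae, hψaf, hfψa, mw heψa, mw hψae, mw hψaf, mw hfψa,
          dem, dfm, mw3 dem, mw3 dfm, hMzm, mw2 hMzm, hMzm', mw2 hMzm',
          deam, dfam, mw3 deam, mw3 dfam, hamz, mw2 hamz, hamz', mw2 hamz',
          q1, q1', q2, q2', q3, q3'] at h
        first
        | (rw [← sub_eq_zero, ← h]; abel)
        | (rw [← sub_eq_zero, ← neg_eq_zero, ← h]; abel)
      have c21 : f * (ψ (a * m) * e) = f * (ψ m * a) := by
        have h := congrArg (fun z => f * z * e) E
        simp only [mul_add, add_mul, mul_sub, sub_mul, neg_mul, mul_neg, neg_neg, mul_assoc, mul_zero, zero_mul, add_zero, zero_add, neg_zero, sub_zero, zero_sub, mul_one, one_mul, he, hef, hfe, hff, mw he, mw hef, mw hfe, mw hff, hea, hae, haf, hfa, hem, hmf, hme, hfm, hmm, hma,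
          mw hea, mw hae, mw haf, mw hfa, mw hem, mw hmf, mw hme, mw hfm, mw2 hmm, mw2 hma,
          heψa, hψae, hψaf, hfψa, mw heψa, mw hψae, mw hψaf, mw hfψa,
          dem, dfm, mw3 dem, mw3 dfm, hMzm, mw2 hMzm, hMzm', mw2 hMzm',
          deam, dfam, mw3 deam, mw3 dfam, hamz, mw2 hamz, hamz', mw2 hamz',
          q1, q1', q2, q2', q3, q3'] at h
        first
        | (rw [← sub_eq_zero, ← h]; abel)
        | (rw [← sub_eq_zero, ← neg_eq_zero, ← h]; abel)
      conv_lhs => rw [dam]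
      rw [c12, c21]
      try abel
    -- product with B on the right : psi(m*b)
    have hMB : ∀ m b, m = e * m * f → b = f * b * f →
        ψ (m * b) = e * (ψ m * b) + m * ψ b + b * (ψ m * e) := by
      intro m b hm hb
      have hem : e * m = m := jacketL he hm
      have hmf : m * f = m := jacketR hff hm
      have hme : m * e = 0 := jacketR0 hfe hm
      have hfm : f * m = 0 := jacketL0 hfe hm
      have hmm : m * m = 0 := mm0 hmf hem hfe
      have hfb : f * b = b := jacketL hff hb
      have hbf : b * f = b := jacketR hff hb
      have hbe : b * e = 0 := jacketR0 hfe hb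
      have heb : e * b = 0 := jacketL0 hef hb
      have hbm : b * m = 0 := mm0 hbf hem hfe
      have hmb : m * b = e * (m * b) * f := jmul hem hbf
      obtain ⟨dm, dem, dfm, hMzm, hMzm'⟩ := hM m hm
      obtain ⟨dmb, demb, dfmb, hmbz, hmbz'⟩ := hM (m * b) hmb
      have hψb := hB b hb
      have heψb : e * ψ b = 0 := jacketL0 hef hψb
      have hψbe : ψ b * e = 0 := jacketR0 hfe hψb
      have hfψb : f * ψ b = ψ b := jacketL hff hψb
      have hψbf : ψ b * f = ψ b := jacketR hff hψb
      have q1 : f * (ψ m * b) = 0 := zr1 (mw3 dfm) hfb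
      have q1' : ∀ z, f * (ψ m * (b * z)) = 0 := zr2 (mw3 dfm) hfb
      have q2 : b * (ψ m * f) = 0 := zl1 hbf dfm
      have q2' : ∀ z, b * (ψ m * (f * z)) = 0 := fun z => zl1 hbf (mw3 dfm z)
      have q3 : e * (ψ (m * b) * m) = 0 := zr1 (mw3 demb) hem
      have q3' : ∀ z, e * (ψ (m * b) * (m * z)) = 0 := zr2 (mw3 demb) hem
      have q4 : m * (ψ (m * b) * f) = 0 := zl1 hmf dfmb
      have q4' : ∀ z, m * (ψ (m * b) * (f * z)) = 0 := fun z => zl1 hmf (mw3 dfmb z)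
      have q5 : b * (ψ (m * b) * f) = 0 := zl1 hbf dfmb
      have q5' : ∀ z, b * (ψ (m * b) * (f * z)) = 0 := fun z => zl1 hbf (mw3 dfmb z)
      have p1 : (e - m) * (b + m * b) = 0 := by
        simp only [mul_add, add_mul, mul_sub, sub_mul, neg_mul, mul_neg, neg_neg, mul_assoc, mul_zero, zero_mul, add_zero, zero_add, neg_zero, sub_zero, zero_sub, mul_one, one_mul, he, hef, hfe, hff, mw he, mw hef, mw hfe, mw hff, hem, hmf, hme, hfm, hmm, hfb, hbf, hbe, heb, hbm,
          mw hem, mw hmf, mw hme, mw hfm, mw2 hmm, mw hfb, mw hbf, mw hbe, mw heb, mw2 hbm]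
        try abel
      have p2 : (b + m * b) * (e - m) = 0 := by
        simp only [mul_add, add_mul, mul_sub, sub_mul, neg_mul, mul_neg, neg_neg, mul_assoc, mul_zero, zero_mul, add_zero, zero_add, neg_zero, sub_zero, zero_sub, mul_one, one_mul, he, hef, hfe, hff, mw he, mw hef, mw hfe, mw hff, hem, hmf, hme, hfm, hmm, hfb, hbf, hbe, heb, hbm,
          mw hem, mw hmf, mw hme, mw hfm, mw2 hmm, mw hfb, mw hbf, mw hbe, mw heb, mw2 hbm]
        try abel
      have E := hPψ (e - m) (b + m * b) p1 p2
      rw [hψsub, hψe, zero_sub, hadd] at E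
      have c12 : e * (ψ (m * b) * f) = e * (ψ m * b) + m * ψ b := by
        have h := congrArg (fun z => e * z * f) E
        simp only [mul_add, add_mul, mul_sub, sub_mul, neg_mul, mul_neg, neg_neg, mul_assoc, mul_zero, zero_mul, add_zero, zero_add, neg_zero, sub_zero, zero_sub, mul_one, one_mul, he, hef, hfe, hff, mw he, mw hef, mw hfe, mw hff, hem, hmf, hme, hfm, hmm, hfb, hbf, hbe, heb, hbm,
          mw hem, mw hmf, mw hme, mw hfm, mw2 hmm, mw hfb, mw hbf, mw hbe, mw heb, mw2 hbm,
          heψb, hψbe, hfψb, hψbf, mw heψb, mw hψbe, mw hfψb, mw hψbf,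
          dem, dfm, mw3 dem, mw3 dfm, hMzm, mw2 hMzm, hMzm', mw2 hMzm',
          demb, dfmb, mw3 demb, mw3 dfmb, hmbz, mw2 hmbz, hmbz', mw2 hmbz',
          q1, q1', q2, q2', q3, q3', q4, q4', q5, q5'] at h
        first
        | (rw [← sub_eq_zero, ← h]; abel)
        | (rw [← sub_eq_zero, ← neg_eq_zero, ← h]; abel)
      have c21 : f * (ψ (m * b) * e) = b * (ψ m * e) := by
        have h := congrArg (fun z => f * z * e) E
        simp only [mul_add, add_mul, mul_sub, sub_mul, neg_mul, mul_neg, neg_neg, mul_assoc, mul_zero, zero_mul, add_zero, zero_add, neg_zero, sub_zero, zero_sub, mul_one, one_mul, he, hef, hfe, hff, mw he, mw hef, mw hfe, mw hff, hem, hmf, hme, hfm, hmm, hfb, hbf, hbe, heb, hbm,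
          mw hem, mw hmf, mw hme, mw hfm, mw2 hmm, mw hfb, mw hbf, mw hbe, mw heb, mw2 hbm,
          heψb, hψbe, hfψb, hψbf, mw heψb, mw hψbe, mw hfψb, mw hψbf,
          dem, dfm, mw3 dem, mw3 dfm, hMzm, mw2 hMzm, hMzm', mw2 hMzm',
          demb, dfmb, mw3 demb, mw3 dfmb, hmbz, mw2 hmbz, hmbz', mw2 hmbz',
          q1, q1', q2, q2', q3, q3', q4, q4', q5, q5'] at h
        first
        | (rw [← sub_eq_zero, ← h]; abel)
        | (rw [← sub_eq_zero, ← neg_eq_zero, ← h]; abel)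
      conv_lhs => rw [dmb]
      rw [c12, c21]
      try abel
    -- product with A on the right : psi(n*a)
    have hNA : ∀ n a, n = f * n * e → a = e * a * e →
        ψ (n * a) = f * (ψ n * a) + n * ψ a + a * (ψ n * f) := by
      intro n a hn ha
      have hfn : f * n = n := jacketL hff hn
      have hne : n * e = n := jacketR he hn
      have hnf : n * f = 0 := jacketR0 hef hn
      have hen : e * n = 0 := jacketL0 hef hn
      have hnn : n * n = 0 := mm0 hne hfn hef
      have hea : e * a = a := jacketL he ha
      have hae : a * e = a := jacketR he ha
      have haf : a * f = 0 := jacketR0 hef ha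
      have hfa : f * a = 0 := jacketL0 hfe ha
      have han : a * n = 0 := mm0 hae hfn hef
      have hna : n * a = f * (n * a) * e := jmul hfn hae
      obtain ⟨dn, den, dfn, hNzn, hNzn'⟩ := hN n hn
      obtain ⟨dna, dena, dfna, hnaz, hnaz'⟩ := hN (n * a) hna
      have hψa := hA a ha
      have heψa : e * ψ a = ψ a := jacketL he hψa
      have hψae : ψ a * e = ψ a := jacketR he hψa
      have hψaf : ψ a * f = 0 := jacketR0 hef hψa
      have hfψa : f * ψ a = 0 := jacketL0 hfe hψa
      have q1 : e * (ψ n * a) = 0 := zr1 (mw3 den) hea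
      have q1' : ∀ z, e * (ψ n * (a * z)) = 0 := zr2 (mw3 den) hea
      have q2 : a * (ψ n * e) = 0 := zl1 hae den
      have q2' : ∀ z, a * (ψ n * (e * z)) = 0 := fun z => zl1 hae (mw3 den z)
      have q3 : f * (ψ (n * a) * n) = 0 := zr1 (mw3 dfna) hfn
      have q3' : ∀ z, f * (ψ (n * a) * (n * z)) = 0 := zr2 (mw3 dfna) hfn
      have q4 : n * (ψ (n * a) * e) = 0 := zl1 hne dena
      have q4' : ∀ z, n * (ψ (n * a) * (e * z)) = 0 := fun z => zl1 hne (mw3 dena z)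
      have q5 : a * (ψ (n * a) * e) = 0 := zl1 hae dena
      have q5' : ∀ z, a * (ψ (n * a) * (e * z)) = 0 := fun z => zl1 hae (mw3 dena z)
      have p1 : (f - n) * (a + n * a) = 0 := by
        simp only [mul_add, add_mul, mul_sub, sub_mul, neg_mul, mul_neg, neg_neg, mul_assoc, mul_zero, zero_mul, add_zero, zero_add, neg_zero, sub_zero, zero_sub, mul_one, one_mul, he, hef, hfe, hff, mw he, mw hef, mw hfe, mw hff, hfn, hne, hnf, hen, hnn, hea, hae, haf, hfa, han,
          mw hfn, mw hne, mw hnf, mw hen, mw2 hnn, mw hea, mw hae, mw haf, mw hfa, mw2 han]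
        try abel
      have p2 : (a + n * a) * (f - n) = 0 := by
        simp only [mul_add, add_mul, mul_sub, sub_mul, neg_mul, mul_neg, neg_neg, mul_assoc, mul_zero, zero_mul, add_zero, zero_add, neg_zero, sub_zero, zero_sub, mul_one, one_mul, he, hef, hfe, hff, mw he, mw hef, mw hfe, mw hff, hfn, hne, hnf, hen, hnn, hea, hae, haf, hfa, han,
          mw hfn, mw hne, mw hnf, mw hen, mw2 hnn, mw hea, mw hae, mw haf, mw hfa, mw2 han]
        try abel
      have E := hPψ (f - n) (a + n * a) p1 p2
      rw [hψsub, hψf, zero_sub, hadd] at E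
      have c21 : f * (ψ (n * a) * e) = f * (ψ n * a) + n * ψ a := by
        have h := congrArg (fun z => f * z * e) E
        simp only [mul_add, add_mul, mul_sub, sub_mul, neg_mul, mul_neg, neg_neg, mul_assoc, mul_zero, zero_mul, add_zero, zero_add, neg_zero, sub_zero, zero_sub, mul_one, one_mul, he, hef, hfe, hff, mw he, mw hef, mw hfe, mw hff, hfn, hne, hnf, hen, hnn, hea, hae, haf, hfa, han,
          mw hfn, mw hne, mw hnf, mw hen, mw2 hnn, mw hea, mw hae, mw haf, mw hfa, mw2 han,
          heψa, hψae, hψaf, hfψa, mw heψa, mw hψae, mw hψaf, mw hfψa,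
          den, dfn, mw3 den, mw3 dfn, hNzn, mw2 hNzn, hNzn', mw2 hNzn',
          dena, dfna, mw3 dena, mw3 dfna, hnaz, mw2 hnaz, hnaz', mw2 hnaz',
          q1, q1', q2, q2', q3, q3', q4, q4', q5, q5'] at h
        first
        | (rw [← sub_eq_zero, ← h]; abel)
        | (rw [← sub_eq_zero, ← neg_eq_zero, ← h]; abel)
      have c12 : e * (ψ (n * a) * f) = a * (ψ n * f) := by
        have h := congrArg (fun z => e * z * f) E
        simp only [mul_add, add_mul, mul_sub, sub_mul, neg_mul, mul_neg, neg_neg, mul_assoc, mul_zero, zero_mul, add_zero, zero_add, neg_zero, sub_zero, zero_sub, mul_one, one_mul, he, hef, hfe, hff, mw he, mw hef, mw hfe, mw hff, hfn, hne, hnf, hen, hnn, hea, hae, haf, hfa, han,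
          mw hfn, mw hne, mw hnf, mw hen, mw2 hnn, mw hea, mw hae, mw haf, mw hfa, mw2 han,
          heψa, hψae, hψaf, hfψa, mw heψa, mw hψae, mw hψaf, mw hfψa,
          den, dfn, mw3 den, mw3 dfn, hNzn, mw2 hNzn, hNzn', mw2 hNzn',
          dena, dfna, mw3 dena, mw3 dfna, hnaz, mw2 hnaz, hnaz', mw2 hnaz',
          q1, q1', q2, q2', q3, q3', q4, q4', q5, q5'] at h
        first
        | (rw [← sub_eq_zero, ← h]; abel)
        | (rw [← sub_eq_zero, ← neg_eq_zero, ← h]; abel)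
      conv_lhs => rw [dna]
      rw [c12, c21]
      try abel
    -- product with B on the left : psi(b*n)
    have hBN : ∀ b n, b = f * b * f → n = f * n * e →
        ψ (b * n) = ψ b * n + b * (ψ n * e) + e * (ψ n * b) := by
      intro b n hb hn
      have hfn : f * n = n := jacketL hff hn
      have hne : n * e = n := jacketR he hn
      have hnf : n * f = 0 := jacketR0 hef hn
      have hen : e * n = 0 := jacketL0 hef hn
      have hnn : n * n = 0 := mm0 hne hfn hef
      have hfb : f * b = b := jacketL hff hb
      have hbf : b * f = b := jacketR hff hb
      have hbe : b * e = 0 := jacketR0 hfe hb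
      have heb : e * b = 0 := jacketL0 hef hb
      have hnb : n * b = 0 := mm0 hne hfb hef
      have hbn : b * n = f * (b * n) * e := jmul hfb hne
      obtain ⟨dn, den, dfn, hNzn, hNzn'⟩ := hN n hn
      obtain ⟨dbn, debn, dfbn, hbnz, hbnz'⟩ := hN (b * n) hbn
      have hψb := hB b hb
      have heψb : e * ψ b = 0 := jacketL0 hef hψb
      have hψbe : ψ b * e = 0 := jacketR0 hfe hψb
      have hfψb : f * ψ b = ψ b := jacketL hff hψb
      have hψbf : ψ b * f = ψ b := jacketR hff hψb
      have q1 : f * (ψ n * b) = 0 := zr1 (mw3 dfn) hfb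
      have q1' : ∀ z, f * (ψ n * (b * z)) = 0 := zr2 (mw3 dfn) hfb
      have q2 : b * (ψ n * f) = 0 := zl1 hbf dfn
      have q2' : ∀ z, b * (ψ n * (f * z)) = 0 := fun z => zl1 hbf (mw3 dfn z)
      have q3 : f * (ψ (b * n) * n) = 0 := zr1 (mw3 dfbn) hfn
      have q3' : ∀ z, f * (ψ (b * n) * (n * z)) = 0 := zr2 (mw3 dfbn) hfn
      have q4 : n * (ψ (b * n) * e) = 0 := zl1 hne debn
      have q4' : ∀ z, n * (ψ (b * n) * (e * z)) = 0 := fun z => zl1 hne (mw3 debn z)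
      have q5 : b * (ψ (b * n) * f) = 0 := zl1 hbf dfbn
      have q5' : ∀ z, b * (ψ (b * n) * (f * z)) = 0 := fun z => zl1 hbf (mw3 dfbn z)
      have p1 : (e - n) * (b + b * n) = 0 := by
        simp only [mul_add, add_mul, mul_sub, sub_mul, neg_mul, mul_neg, neg_neg, mul_assoc, mul_zero, zero_mul, add_zero, zero_add, neg_zero, sub_zero, zero_sub, mul_one, one_mul, he, hef, hfe, hff, mw he, mw hef, mw hfe, mw hff, hfn, hne, hnf, hen, hnn, hfb, hbf, hbe, heb, hnb,
          mw hfn, mw hne, mw hnf, mw hen, mw2 hnn, mw hfb, mw hbf, mw hbe, mw heb, mw2 hnb]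
        try abel
      have p2 : (b + b * n) * (e - n) = 0 := by
        simp only [mul_add, add_mul, mul_sub, sub_mul, neg_mul, mul_neg, neg_neg, mul_assoc, mul_zero, zero_mul, add_zero, zero_add, neg_zero, sub_zero, zero_sub, mul_one, one_mul, he, hef, hfe, hff, mw he, mw hef, mw hfe, mw hff, hfn, hne, hnf, hen, hnn, hfb, hbf, hbe, heb, hnb,
          mw hfn, mw hne, mw hnf, mw hen, mw2 hnn, mw hfb, mw hbf, mw hbe, mw heb, mw2 hnb]
        try abel
      have E := hPψ (e - n) (b + b * n) p1 p2
      rw [hψsub, hψe, zero_sub, hadd] at E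
      have c21 : f * (ψ (b * n) * e) = b * (ψ n * e) + ψ b * n := by
        have h := congrArg (fun z => f * z * e) E
        simp only [mul_add, add_mul, mul_sub, sub_mul, neg_mul, mul_neg, neg_neg, mul_assoc, mul_zero, zero_mul, add_zero, zero_add, neg_zero, sub_zero, zero_sub, mul_one, one_mul, he, hef, hfe, hff, mw he, mw hef, mw hfe, mw hff, hfn, hne, hnf, hen, hnn, hfb, hbf, hbe, heb, hnb,
          mw hfn, mw hne, mw hnf, mw hen, mw2 hnn, mw hfb, mw hbf, mw hbe, mw heb, mw2 hnb,
          heψb, hψbe, hfψb, hψbf, mw heψb, mw hψbe, mw hfψb, mw hψbf,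
          den, dfn, mw3 den, mw3 dfn, hNzn, mw2 hNzn, hNzn', mw2 hNzn',
          debn, dfbn, mw3 debn, mw3 dfbn, hbnz, mw2 hbnz, hbnz', mw2 hbnz',
          q1, q1', q2, q2', q3, q3', q4, q4', q5, q5'] at h
        first
        | (rw [← sub_eq_zero, ← h]; abel)
        | (rw [← sub_eq_zero, ← neg_eq_zero, ← h]; abel)
      have c12 : e * (ψ (b * n) * f) = e * (ψ n * b) := by
        have h := congrArg (fun z => e * z * f) E
        simp only [mul_add, add_mul, mul_sub, sub_mul, neg_mul, mul_neg, neg_neg, mul_assoc, mul_zero, zero_mul, add_zero, zero_add, neg_zero, sub_zero, zero_sub, mul_one, one_mul, he, hef, hfe, hff, mw he, mw hef, mw hfe, mw hff, hfn, hne, hnf, hen, hnn, hfb, hbf, hbe, heb, hnb,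
          mw hfn, mw hne, mw hnf, mw hen, mw2 hnn, mw hfb, mw hbf, mw hbe, mw heb, mw2 hnb,
          heψb, hψbe, hfψb, hψbf, mw heψb, mw hψbe, mw hfψb, mw hψbf,
          den, dfn, mw3 den, mw3 dfn, hNzn, mw2 hNzn, hNzn', mw2 hNzn',
          debn, dfbn, mw3 debn, mw3 dfbn, hbnz, mw2 hbnz, hbnz', mw2 hbnz',
          q1, q1', q2, q2', q3, q3', q4, q4', q5, q5'] at h
        first
        | (rw [← sub_eq_zero, ← h]; abel)
        | (rw [← sub_eq_zero, ← neg_eq_zero, ← h]; abel)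
      conv_lhs => rw [dbn]
      rw [c12, c21]
      try abel
    -- derivation on the A corner
    have hAA : ∀ a c, a = e * a * e → c = e * c * e →
        ψ (a * c) = ψ a * c + a * ψ c := by
      intro a c ha hc
      have hea : e * a = a := jacketL he ha
      have hae : a * e = a := jacketR he ha
      have haf : a * f = 0 := jacketR0 hef ha
      have hfa : f * a = 0 := jacketL0 hfe ha
      have hec : e * c = c := jacketL he hc
      have hce : c * e = c := jacketR he hc
      have hcf : c * f = 0 := jacketR0 hef hc
      have hfc : f * c = 0 := jacketL0 hfe hc
      have hac : a * c = e * (a * c) * e := jmul hea hce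
      have hψa := hA a ha
      have heψa : e * ψ a = ψ a := jacketL he hψa
      have hψae : ψ a * e = ψ a := jacketR he hψa
      have hψaf : ψ a * f = 0 := jacketR0 hef hψa
      have hfψa : f * ψ a = 0 := jacketL0 hfe hψa
      have hψc := hA c hc
      have heψc : e * ψ c = ψ c := jacketL he hψc
      have hψce : ψ c * e = ψ c := jacketR he hψc
      have hψcf : ψ c * f = 0 := jacketR0 hef hψc
      have hfψc : f * ψ c = 0 := jacketL0 hfe hψc
      have hψac := hA (a * c) hac
      have heψac : e * ψ (a * c) = ψ (a * c) := jacketL he hψac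
      have hψace : ψ (a * c) * e = ψ (a * c) := jacketR he hψac
      have hψacf : ψ (a * c) * f = 0 := jacketR0 hef hψac
      have hfψac : f * ψ (a * c) = 0 := jacketL0 hfe hψac
      have key : ∀ x : R, (ψ (a * c) - ψ a * c - a * ψ c) * (e * x * f) = 0 := by
        intro x
        obtain ⟨m, hm0⟩ : ∃ t, t = e * x * f := ⟨_, rfl⟩
        rw [← hm0]
        have hm : m = e * m * f := by
          rw [hm0]
          simp only [mul_assoc, hff, mw he]
        have hem : e * m = m := jacketL he hm
        have hmf : m * f = m := jacketR hff hm
        have hme : m * e = 0 := jacketR0 hfe hm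
        have hfm : f * m = 0 := jacketL0 hfe hm
        have A1 := hAM a (c * m) ha (jmul hec hmf)
        have A2 := hAM c m hc hm
        have A3 := hAM (a * c) m hac hm
        rw [(mul_assoc a c m).symm] at A1
        have E := A3.symm.trans A1
        rw [A2] at E
        have h := congrArg (fun z => e * z * f) E
        simp only [mul_add, add_mul, mul_sub, sub_mul, neg_mul, mul_neg, neg_neg, mul_assoc, mul_zero, zero_mul, add_zero, zero_add, neg_zero, sub_zero, zero_sub, mul_one, one_mul, he, hef, hfe, hff, mw he, mw hef, mw hfe, mw hff, hea, hae, haf, hfa, hec, hce, hcf, hfc, hem, hmf, hme, hfm,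
          mw hea, mw hae, mw haf, mw hfa, mw hec, mw hce, mw hcf, mw hfc,
          mw hem, mw hmf, mw hme, mw hfm,
          heψa, hψae, hψaf, hfψa, mw heψa, mw hψae, mw hψaf, mw hfψa,
          heψc, hψce, hψcf, hfψc, mw heψc, mw hψce, mw hψcf, mw hfψc,
          heψac, hψace, hψacf, hfψac, mw heψac, mw hψace, mw hψacf, mw hfψac] at h
        have h0 := sub_eq_zero.mpr h
        simp only [sub_mul, mul_assoc]
        rw [← h0]
        abel
      have hjac : ψ (a * c) - ψ a * c - a * ψ c
          = e * (ψ (a * c) - ψ a * c - a * ψ c) * e := by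
        simp only [mul_sub, sub_mul, mul_assoc, hce, hψce, hψace, heψac, heψa, hea,
          mw heψac, mw heψa, mw hea]
      have hΔ := hlf _ hjac key
      rw [sub_sub, sub_eq_zero] at hΔ
      exact hΔ
    -- derivation on the B corner
    have hBB : ∀ b d, b = f * b * f → d = f * d * f →
        ψ (b * d) = ψ b * d + b * ψ d := by
      intro b d hb hd
      have hfb : f * b = b := jacketL hff hb
      have hbf : b * f = b := jacketR hff hb
      have hbe : b * e = 0 := jacketR0 hfe hb
      have heb : e * b = 0 := jacketL0 hef hb
      have hfd : f * d = d := jacketL hff hd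
      have hdf : d * f = d := jacketR hff hd
      have hde : d * e = 0 := jacketR0 hfe hd
      have hed : e * d = 0 := jacketL0 hef hd
      have hbd : b * d = f * (b * d) * f := jmul hfb hdf
      have hψb := hB b hb
      have heψb : e * ψ b = 0 := jacketL0 hef hψb
      have hψbe : ψ b * e = 0 := jacketR0 hfe hψb
      have hfψb : f * ψ b = ψ b := jacketL hff hψb
      have hψbf : ψ b * f = ψ b := jacketR hff hψb
      have hψd := hB d hd
      have heψd : e * ψ d = 0 := jacketL0 hef hψd
      have hψde : ψ d * e = 0 := jacketR0 hfe hψd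
      have hfψd : f * ψ d = ψ d := jacketL hff hψd
      have hψdf : ψ d * f = ψ d := jacketR hff hψd
      have hψbd := hB (b * d) hbd
      have heψbd : e * ψ (b * d) = 0 := jacketL0 hef hψbd
      have hψbde : ψ (b * d) * e = 0 := jacketR0 hfe hψbd
      have hfψbd : f * ψ (b * d) = ψ (b * d) := jacketL hff hψbd
      have hψbdf : ψ (b * d) * f = ψ (b * d) := jacketR hff hψbd
      have key : ∀ x : R, (e * x * f) * (ψ (b * d) - ψ b * d - b * ψ d) = 0 := by
        intro x
        obtain ⟨m, hm0⟩ : ∃ t, t = e * x * f := ⟨_, rfl⟩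
        rw [← hm0]
        have hm : m = e * m * f := by
          rw [hm0]
          simp only [mul_assoc, hff, mw he]
        have hem : e * m = m := jacketL he hm
        have hmf : m * f = m := jacketR hff hm
        have hme : m * e = 0 := jacketR0 hfe hm
        have hfm : f * m = 0 := jacketL0 hfe hm
        have B1 := hMB (m * b) d (jmul hem hbf) hd
        have B2 := hMB m b hm hb
        have B3 := hMB m (b * d) hm (jmul hfb hdf)
        rw [mul_assoc m b d] at B1
        have E := B3.symm.trans B1
        rw [B2] at E
        have h := congrArg (fun z => e * z * f) E
        simp only [mul_add, add_mul, mul_sub, sub_mul, neg_mul, mul_neg, neg_neg, mul_assoc, mul_zero, zero_mul, add_zero, zero_add, neg_zero, sub_zero, zero_sub, mul_one, one_mul, he, hef, hfe, hff, mw he, mw hef, mw hfe, mw hff, hfb, hbf, hbe, heb, hfd, hdf, hde, hed, hem, hmf, hme, hfm,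
          mw hfb, mw hbf, mw hbe, mw heb, mw hfd, mw hdf, mw hde, mw hed,
          mw hem, mw hmf, mw hme, mw hfm,
          heψb, hψbe, hfψb, hψbf, mw heψb, mw hψbe, mw hfψb, mw hψbf,
          heψd, hψde, hfψd, hψdf, mw heψd, mw hψde, mw hfψd, mw hψdf,
          heψbd, hψbde, hfψbd, hψbdf, mw heψbd, mw hψbde, mw hfψbd, mw hψbdf] at h
        have h0 := sub_eq_zero.mpr h
        simp only [mul_sub, mul_assoc]
        rw [← h0]
        abel
      have hjac : ψ (b * d) - ψ b * d - b * ψ d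
          = f * (ψ (b * d) - ψ b * d - b * ψ d) * f := by
        simp only [mul_sub, sub_mul, mul_assoc, hdf, hψdf, hψbdf, hfψbd, hfψb, hfb,
          mw hfψbd, mw hfψb, mw hfb]
      have hΔ := hrf _ hjac key
      rw [sub_sub, sub_eq_zero] at hΔ
      exact hΔ
    -- key quadratic identity for psi(m*n)
    have hWA : ∀ m n, m = e * m * f → n = f * n * e →
        (ψ (m * n) - e * (ψ m * n) - m * (ψ n * e))
          + (m * (n * ψ (m * n)) - m * (n * (ψ m * n)) - m * (n * (m * (ψ n * e)))) = 0 := by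
      intro m n hm hn
      have hem : e * m = m := jacketL he hm
      have hmf : m * f = m := jacketR hff hm
      have hme : m * e = 0 := jacketR0 hfe hm
      have hfm : f * m = 0 := jacketL0 hfe hm
      have hmm : m * m = 0 := mm0 hmf hem hfe
      have hfn : f * n = n := jacketL hff hn
      have hne : n * e = n := jacketR he hn
      have hnf : n * f = 0 := jacketR0 hef hn
      have hen : e * n = 0 := jacketL0 hef hn
      have hnn : n * n = 0 := mm0 hne hfn hef
      obtain ⟨dm, dem, dfm, hMzm, hMzm'⟩ := hM m hm
      obtain ⟨dn, den, dfn, hNzn, hNzn'⟩ := hN n hn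
      have hmn : m * n = e * (m * n) * e := jmul hem hne
      have hnm : n * m = f * (n * m) * f := jmul hfn hmf
      have hψmn := hA (m * n) hmn
      have heψmn : e * ψ (m * n) = ψ (m * n) := jacketL he hψmn
      have hψmne : ψ (m * n) * e = ψ (m * n) := jacketR he hψmn
      have hψmnf : ψ (m * n) * f = 0 := jacketR0 hef hψmn
      have hfψmn : f * ψ (m * n) = 0 := jacketL0 hfe hψmn
      have hψnm := hB (n * m) hnm
      have heψnm : e * ψ (n * m) = 0 := jacketL0 hef hψnm
      have hψnme : ψ (n * m) * e = 0 := jacketR0 hfe hψnm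
      have hfψnm : f * ψ (n * m) = ψ (n * m) := jacketL hff hψnm
      have hψnmf : ψ (n * m) * f = ψ (n * m) := jacketR hff hψnm
      have qa : e * (ψ n * m) = 0 := zr1 (mw3 den) hem
      have qa' : ∀ z, e * (ψ n * (m * z)) = 0 := zr2 (mw3 den) hem
      have qb : f * (ψ m * n) = 0 := zr1 (mw3 dfm) hfn
      have qb' : ∀ z, f * (ψ m * (n * z)) = 0 := zr2 (mw3 dfm) hfn
      have qc : m * (ψ n * f) = 0 := zl1 hmf dfn
      have qc' : ∀ z, m * (ψ n * (f * z)) = 0 := fun z => zl1 hmf (mw3 dfn z)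
      have qd : n * (ψ m * e) = 0 := zl1 hne dem
      have qd' : ∀ z, n * (ψ m * (e * z)) = 0 := fun z => zl1 hne (mw3 dem z)
      have qe : ψ (m * n) * n = 0 := mm0 hψmne hfn hef
      have qf : m * ψ (m * n) = 0 := mm0 hmf heψmn hfe
      have qg : n * ψ (n * m) = 0 := mm0 hne hfψnm hef
      have hPP : (e - m + n - n * m + m * n - m * n * m) * (e - m + n - n * m + m * n - m * n * m)
          = e - m + n - n * m + m * n - m * n * m := by
        simp only [mul_add, add_mul, mul_sub, sub_mul, neg_mul, mul_neg, neg_neg, mul_assoc, mul_zero, zero_mul, add_zero, zero_add, neg_zero, sub_zero, zero_sub, mul_one, one_mul, he, hef, hfe, hff, mw he, mw hef, mw hfe, mw hff, hem, hmf, hme, hfm, hmm, hfn, hne, hnf, hen, hnn,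
          mw hem, mw hmf, mw hme, mw hfm, mw2 hmm, mw hfn, mw hne, mw hnf, mw hen, mw2 hnn]
        try abel
      have huv : (e - m + n - n * m + m * n - m * n * m)
          * (1 - (e - m + n - n * m + m * n - m * n * m)) = 0 := by
        rw [mul_sub, mul_one, hPP, sub_self]
      have hvu : (1 - (e - m + n - n * m + m * n - m * n * m))
          * (e - m + n - n * m + m * n - m * n * m) = 0 := by
        rw [sub_mul, one_mul, hPP, sub_self]
      have E := hPψ _ _ huv hvu
      have hmnm := hAM (m * n) m hmn hm
      simp only [hψsub, hadd, hψ1, hψe] at E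
      rw [hmnm] at E
      have h := congrArg (fun z => e * z * e) E
      simp only [mul_add, add_mul, mul_sub, sub_mul, neg_mul, mul_neg, neg_neg, mul_assoc, mul_zero, zero_mul, add_zero, zero_add, neg_zero, sub_zero, zero_sub, mul_one, one_mul, he, hef, hfe, hff, mw he, mw hef, mw hfe, mw hff, hem, hmf, hme, hfm, hmm, hfn, hne, hnf, hen, hnn,
        mw hem, mw hmf, mw hme, mw hfm, mw2 hmm, mw hfn, mw hne, mw hnf, mw hen, mw2 hnn,
        dem, dfm, mw3 dem, mw3 dfm, hMzm, mw2 hMzm, hMzm', mw2 hMzm',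
        den, dfn, mw3 den, mw3 dfn, hNzn, mw2 hNzn, hNzn', mw2 hNzn',
        heψmn, hψmne, hψmnf, hfψmn, mw heψmn, mw hψmne, mw hψmnf, mw hfψmn,
        heψnm, hψnme, hfψnm, hψnmf, mw heψnm, mw hψnme, mw hfψnm, mw hψnmf,
        qa, qa', qb, qb', qc, qc', qd, qd', qe, mw2 qe, qf, mw2 qf, qg, mw2 qg] at h
      refine tA1 _ ?_ ?_
      · simp only [mul_add, add_mul, mul_sub, sub_mul, neg_mul, mul_neg, neg_neg, mul_assoc, mul_zero, zero_mul, add_zero, zero_add, neg_zero, sub_zero, zero_sub, mul_one, one_mul, he, hef, hfe, hff, mw he, mw hef, mw hfe, mw hff, hem, hmf, hme, hfm, hfn, hne, hnf, hen,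
          mw hem, mw hmf, mw hme, mw hfm, mw hfn, mw hne, mw hnf, mw hen,
          heψmn, hψmne, hψmnf, hfψmn, mw heψmn, mw hψmne, mw hψmnf, mw hfψmn]
      · rw [← neg_eq_zero, ← h]
        abel
    -- key quadratic identity for psi(n*m)
    have hWB : ∀ m n, m = e * m * f → n = f * n * e →
        (ψ (n * m) - f * (ψ n * m) - n * (ψ m * f))
          + (n * (m * ψ (n * m)) - n * (m * (ψ n * m)) - n * (m * (n * (ψ m * f)))) = 0 := by
      intro m n hm hn
      have hem : e * m = m := jacketL he hm
      have hmf : m * f = m := jacketR hff hm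
      have hme : m * e = 0 := jacketR0 hfe hm
      have hfm : f * m = 0 := jacketL0 hfe hm
      have hmm : m * m = 0 := mm0 hmf hem hfe
      have hfn : f * n = n := jacketL hff hn
      have hne : n * e = n := jacketR he hn
      have hnf : n * f = 0 := jacketR0 hef hn
      have hen : e * n = 0 := jacketL0 hef hn
      have hnn : n * n = 0 := mm0 hne hfn hef
      obtain ⟨dm, dem, dfm, hMzm, hMzm'⟩ := hM m hm
      obtain ⟨dn, den, dfn, hNzn, hNzn'⟩ := hN n hn
      have hmn : m * n = e * (m * n) * e := jmul hem hne
      have hnm : n * m = f * (n * m) * f := jmul hfn hmf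
      have hψmn := hA (m * n) hmn
      have heψmn : e * ψ (m * n) = ψ (m * n) := jacketL he hψmn
      have hψmne : ψ (m * n) * e = ψ (m * n) := jacketR he hψmn
      have hψmnf : ψ (m * n) * f = 0 := jacketR0 hef hψmn
      have hfψmn : f * ψ (m * n) = 0 := jacketL0 hfe hψmn
      have hψnm := hB (n * m) hnm
      have heψnm : e * ψ (n * m) = 0 := jacketL0 hef hψnm
      have hψnme : ψ (n * m) * e = 0 := jacketR0 hfe hψnm
      have hfψnm : f * ψ (n * m) = ψ (n * m) := jacketL hff hψnm
      have hψnmf : ψ (n * m) * f = ψ (n * m) := jacketR hff hψnm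
      have qa : e * (ψ n * m) = 0 := zr1 (mw3 den) hem
      have qa' : ∀ z, e * (ψ n * (m * z)) = 0 := zr2 (mw3 den) hem
      have qb : f * (ψ m * n) = 0 := zr1 (mw3 dfm) hfn
      have qb' : ∀ z, f * (ψ m * (n * z)) = 0 := zr2 (mw3 dfm) hfn
      have qc : m * (ψ n * f) = 0 := zl1 hmf dfn
      have qc' : ∀ z, m * (ψ n * (f * z)) = 0 := fun z => zl1 hmf (mw3 dfn z)
      have qd : n * (ψ m * e) = 0 := zl1 hne dem
      have qd' : ∀ z, n * (ψ m * (e * z)) = 0 := fun z => zl1 hne (mw3 dem z)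
      have qe : ψ (m * n) * n = 0 := mm0 hψmne hfn hef
      have qf : m * ψ (m * n) = 0 := mm0 hmf heψmn hfe
      have qg : n * ψ (n * m) = 0 := mm0 hne hfψnm hef
      have qh : ψ (n * m) * m = 0 := mm0 hψnmf hem hfe
      have hPP : (f - n + m - m * n + n * m - n * m * n) * (f - n + m - m * n + n * m - n * m * n)
          = f - n + m - m * n + n * m - n * m * n := by
        simp only [mul_add, add_mul, mul_sub, sub_mul, neg_mul, mul_neg, neg_neg, mul_assoc, mul_zero, zero_mul, add_zero, zero_add, neg_zero, sub_zero, zero_sub, mul_one, one_mul, he, hef, hfe, hff, mw he, mw hef, mw hfe, mw hff, hem, hmf, hme, hfm, hmm, hfn, hne, hnf, hen, hnn,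
          mw hem, mw hmf, mw hme, mw hfm, mw2 hmm, mw hfn, mw hne, mw hnf, mw hen, mw2 hnn]
        try abel
      have huv : (f - n + m - m * n + n * m - n * m * n)
          * (1 - (f - n + m - m * n + n * m - n * m * n)) = 0 := by
        rw [mul_sub, mul_one, hPP, sub_self]
      have hvu : (1 - (f - n + m - m * n + n * m - n * m * n))
          * (f - n + m - m * n + n * m - n * m * n) = 0 := by
        rw [sub_mul, one_mul, hPP, sub_self]
      have E := hPψ _ _ huv hvu
      have hnmn := hBN (n * m) n hnm hn
      simp only [hψsub, hadd, hψ1, hψf] at E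
      rw [hnmn] at E
      have h := congrArg (fun z => f * z * f) E
      simp only [mul_add, add_mul, mul_sub, sub_mul, neg_mul, mul_neg, neg_neg, mul_assoc, mul_zero, zero_mul, add_zero, zero_add, neg_zero, sub_zero, zero_sub, mul_one, one_mul, he, hef, hfe, hff, mw he, mw hef, mw hfe, mw hff, hem, hmf, hme, hfm, hmm, hfn, hne, hnf, hen, hnn,
        mw hem, mw hmf, mw hme, mw hfm, mw2 hmm, mw hfn, mw hne, mw hnf, mw hen, mw2 hnn,
        dem, dfm, mw3 dem, mw3 dfm, hMzm, mw2 hMzm, hMzm', mw2 hMzm',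
        den, dfn, mw3 den, mw3 dfn, hNzn, mw2 hNzn, hNzn', mw2 hNzn',
        heψmn, hψmne, hψmnf, hfψmn, mw heψmn, mw hψmne, mw hψmnf, mw hfψmn,
        heψnm, hψnme, hfψnm, hψnmf, mw heψnm, mw hψnme, mw hfψnm, mw hψnmf,
        qa, qa', qb, qb', qc, qc', qd, qd', qe, mw2 qe, qf, mw2 qf, qg, mw2 qg,
        qh, mw2 qh] at h
      refine tB1 _ ?_ ?_
      · simp only [mul_add, add_mul, mul_sub, sub_mul, neg_mul, mul_neg, neg_neg, mul_assoc, mul_zero, zero_mul, add_zero, zero_add, neg_zero, sub_zero, zero_sub, mul_one, one_mul, he, hef, hfe, hff, mw he, mw hef, mw hfe, mw hff, hem, hmf, hme, hfm, hfn, hne, hnf, hen,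
          mw hem, mw hmf, mw hme, mw hfm, mw hfn, mw hne, mw hnf, mw hen,
          heψnm, hψnme, hfψnm, hψnmf, mw heψnm, mw hψnme, mw hfψnm, mw hψnmf]
      · rw [← neg_eq_zero, ← h]
        abel
    -- the psi(m*n) product formula
    have hMN : ∀ m n, m = e * m * f → n = f * n * e →
        ψ (m * n) = e * (ψ m * n) + m * (ψ n * e) := by
      intro m n hm hn
      have hem : e * m = m := jacketL he hm
      have hmf : m * f = m := jacketR hff hm
      have hfn : f * n = n := jacketL hff hn
      have hne : n * e = n := jacketR he hn
      have hmn : m * n = e * (m * n) * e := jmul hem hne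
      have hψmn := hA (m * n) hmn
      have heψmn : e * ψ (m * n) = ψ (m * n) := jacketL he hψmn
      have hψmne : ψ (m * n) * e = ψ (m * n) := jacketR he hψmn
      have w1 := hWA m n hm hn
      have hm2 : m + m = e * (m + m) * f := by
        conv_lhs => rw [hm]
        simp only [mul_add, add_mul]
      have w2 := hWA (m + m) n hm2 hn
      simp only [add_mul, mul_add, hadd] at w2
      have hT : (m * (n * ψ (m * n)) - m * (n * (ψ m * n)) - m * (n * (m * (ψ n * e))))
          + (m * (n * ψ (m * n)) - m * (n * (ψ m * n)) - m * (n * (m * (ψ n * e)))) = 0 := by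
        have hc := subz w2 (addz w1 w1)
        rw [← hc]
        abel
      have hT0 : m * (n * ψ (m * n)) - m * (n * (ψ m * n)) - m * (n * (m * (ψ n * e))) = 0 := by
        refine tA1 _ ?_ hT
        simp only [mul_add, add_mul, mul_sub, sub_mul, neg_mul, mul_neg, neg_neg, mul_assoc, mul_zero, zero_mul, add_zero, zero_add, neg_zero, sub_zero, zero_sub, mul_one, one_mul, he, hef, hfe, hff, mw he, mw hef, mw hfe, mw hff, hem, hmf, hfn, hne, mw hem, mw hmf, mw hfn, mw hne,
          heψmn, hψmne, mw heψmn, mw hψmne]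
      rw [hT0, add_zero, sub_sub, sub_eq_zero] at w1
      exact w1
    -- the psi(n*m) product formula
    have hNM : ∀ m n, m = e * m * f → n = f * n * e →
        ψ (n * m) = f * (ψ n * m) + n * (ψ m * f) := by
      intro m n hm hn
      have hem : e * m = m := jacketL he hm
      have hmf : m * f = m := jacketR hff hm
      have hfn : f * n = n := jacketL hff hn
      have hne : n * e = n := jacketR he hn
      have hnm : n * m = f * (n * m) * f := jmul hfn hmf
      have hψnm := hB (n * m) hnm
      have hfψnm : f * ψ (n * m) = ψ (n * m) := jacketL hff hψnm
      have hψnmf : ψ (n * m) * f = ψ (n * m) := jacketR hff hψnm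
      have w1 := hWB m n hm hn
      have hn2 : n + n = f * (n + n) * e := by
        conv_lhs => rw [hn]
        simp only [mul_add, add_mul]
      have w2 := hWB m (n + n) hm hn2
      simp only [add_mul, mul_add, hadd] at w2
      have hT : (n * (m * ψ (n * m)) - n * (m * (ψ n * m)) - n * (m * (n * (ψ m * f))))
          + (n * (m * ψ (n * m)) - n * (m * (ψ n * m)) - n * (m * (n * (ψ m * f)))) = 0 := by
        have hc := subz w2 (addz w1 w1)
        rw [← hc]
        abel
      have hT0 : n * (m * ψ (n * m)) - n * (m * (ψ n * m)) - n * (m * (n * (ψ m * f))) = 0 := by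
        refine tB1 _ ?_ hT
        simp only [mul_add, add_mul, mul_sub, sub_mul, neg_mul, mul_neg, neg_neg, mul_assoc, mul_zero, zero_mul, add_zero, zero_add, neg_zero, sub_zero, zero_sub, mul_one, one_mul, he, hef, hfe, hff, mw he, mw hef, mw hfe, mw hff, hem, hmf, hfn, hne, mw hem, mw hmf, mw hfn, mw hne,
          hfψnm, hψnmf, mw hfψnm, mw hψnmf]
      rw [hT0, add_zero, sub_sub, sub_eq_zero] at w1
      exact w1
    -- assembly
    intro U
    obtain ⟨a, ha0⟩ : ∃ t, t = e * (U * e) := ⟨_, rfl⟩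
    obtain ⟨m, hm0⟩ : ∃ t, t = e * (U * f) := ⟨_, rfl⟩
    obtain ⟨n, hn0⟩ : ∃ t, t = f * (U * e) := ⟨_, rfl⟩
    obtain ⟨b, hb0⟩ : ∃ t, t = f * (U * f) := ⟨_, rfl⟩
    have ha : a = e * a * e := by rw [ha0]; simp only [mul_assoc, he, mw he]
    have hm : m = e * m * f := by rw [hm0]; simp only [mul_assoc, hff, mw he]
    have hn : n = f * n * e := by rw [hn0]; simp only [mul_assoc, he, mw hff]
    have hb : b = f * b * f := by rw [hb0]; simp only [mul_assoc, hff, mw hff]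
    have hU : U = a + m + n + b := by rw [ha0, hm0, hn0, hb0]; exact dec U
    have hea : e * a = a := jacketL he ha
    have hae : a * e = a := jacketR he ha
    have haf : a * f = 0 := jacketR0 hef ha
    have hfa : f * a = 0 := jacketL0 hfe ha
    have hem : e * m = m := jacketL he hm
    have hmf : m * f = m := jacketR hff hm
    have hme : m * e = 0 := jacketR0 hfe hm
    have hfm : f * m = 0 := jacketL0 hfe hm
    have hfn : f * n = n := jacketL hff hn
    have hne : n * e = n := jacketR he hn
    have hnf : n * f = 0 := jacketR0 hef hn
    have hen : e * n = 0 := jacketL0 hef hn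
    have hfb : f * b = b := jacketL hff hb
    have hbf : b * f = b := jacketR hff hb
    have hbe : b * e = 0 := jacketR0 hfe hb
    have heb : e * b = 0 := jacketL0 hef hb
    have zan : a * n = 0 := mm0 hae hfn hef
    have zab : a * b = 0 := mm0 hae hfb hef
    have zma : m * a = 0 := mm0 hmf hea hfe
    have zmm : m * m = 0 := mm0 hmf hem hfe
    have zba : b * a = 0 := mm0 hbf hea hfe
    have zbm : b * m = 0 := mm0 hbf hem hfe
    have znn : n * n = 0 := mm0 hne hfn hef
    have znb : n * b = 0 := mm0 hne hfb hef
    obtain ⟨dm, dem, dfm, hMzm, hMzm'⟩ := hM m hm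
    obtain ⟨dn, den, dfn, hNzn, hNzn'⟩ := hN n hn
    have hψa := hA a ha
    have heψa : e * ψ a = ψ a := jacketL he hψa
    have hψae : ψ a * e = ψ a := jacketR he hψa
    have hψaf : ψ a * f = 0 := jacketR0 hef hψa
    have hfψa : f * ψ a = 0 := jacketL0 hfe hψa
    have hψb := hB b hb
    have heψb : e * ψ b = 0 := jacketL0 hef hψb
    have hψbe : ψ b * e = 0 := jacketR0 hfe hψb
    have hfψb : f * ψ b = ψ b := jacketL hff hψb
    have hψbf : ψ b * f = ψ b := jacketR hff hψb
    have zψan : ψ a * n = 0 := mm0 hψae hfn hef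
    have zψab : ψ a * b = 0 := mm0 hψae hfb hef
    have zmψa : m * ψ a = 0 := mm0 hmf heψa hfe
    have zbψa : b * ψ a = 0 := mm0 hbf heψa hfe
    have zψbm : ψ b * m = 0 := mm0 hψbf hem hfe
    have zψba : ψ b * a = 0 := mm0 hψbf hea hfe
    have zaψb : a * ψ b = 0 := mm0 hae hfψb hef
    have znψb : n * ψ b = 0 := mm0 hne hfψb hef
    rw [hU]
    have hprod : (a + m + n + b) * (a + m + n + b)
        = a * a + a * m + m * n + m * b + n * a + n * m + b * n + b * b := by
      simp only [mul_add, add_mul, mul_sub, sub_mul, neg_mul, mul_neg, neg_neg, mul_assoc, mul_zero, zero_mul, add_zero, zero_add, neg_zero, sub_zero, zero_sub, mul_one, one_mul, he, hef, hfe, hff, mw he, mw hef, mw hfe, mw hff, hea, hae, haf, hfa, hem, hmf, hme, hfm, hfn, hne, hnf, hen,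
        hfb, hbf, hbe, heb, zan, zab, zma, zmm, zba, zbm, znn, znb,
        mw zan, mw zab, mw zma, mw zmm, mw zba, mw zbm, mw znn, mw znb]
      try abel
    rw [hprod]
    simp only [hadd]
    rw [hAA a a ha ha, hAM a m ha hm, hMN m n hm hn, hMB m b hm hb,
      hNA n a hn ha, hNM m n hm hn, hBN b n hb hn, hBB b b hb hb]
    rw [dm, dn]
    simp only [mul_add, add_mul, mul_sub, sub_mul, neg_mul, mul_neg, neg_neg, mul_assoc, mul_zero, zero_mul, add_zero, zero_add, neg_zero, sub_zero, zero_sub, mul_one, one_mul, he, hef, hfe, hff, mw he, mw hef, mw hfe, mw hff, hea, hae, haf, hfa, hem, hmf, hme, hfm, hfn, hne, hnf, hen,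
      hfb, hbf, hbe, heb,
      mw hea, mw hae, mw haf, mw hfa, mw hem, mw hmf, mw hme, mw hfm,
      mw hfn, mw hne, mw hnf, mw hen, mw hfb, mw hbf, mw hbe, mw heb,
      zan, zab, zma, zmm, zba, zbm, znn, znb,
      mw2 zan, mw2 zab, mw2 zma, mw2 zmm, mw2 zba, mw2 zbm, mw2 znn, mw2 znb,
      heψa, hψae, hψaf, hfψa, mw heψa, mw hψae, mw hψaf, mw hfψa,
      heψb, hψbe, hfψb, hψbf, mw heψb, mw hψbe, mw hfψb, mw hψbf,
      dem, dfm, mw3 dem, mw3 dfm, hMzm, mw2 hMzm, hMzm', mw2 hMzm',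
      den, dfn, mw3 den, mw3 dfn, hNzn, mw2 hNzn, hNzn', mw2 hNzn',
      zψan, zψab, zmψa, zbψa, zψbm, zψba, zaψb, znψb,
      mw2 zψan, mw2 zψab, mw2 zmψa, mw2 zbψa, mw2 zψbm, mw2 zψba, mw2 zaψb, mw2 znψb]
    try abel
  -- Step 1 : diagonal of φ e vanishes
  have hEf : φ f = - φ e := by
    have h1' := h1
    rw [← hefo, map_add, add_comm] at h1'
    exact eq_neg_of_add_eq_zero_left h1'
  have E0 := hP e f hef hfe
  rw [hEf] at E0
  have d1 : e * (φ e * e) = 0 := by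
    have h := congrArg (fun z => e * z * e) E0
    simp only [mul_add, add_mul, mul_sub, sub_mul, neg_mul, mul_neg, neg_neg, mul_assoc, mul_zero, zero_mul, add_zero, zero_add, neg_zero, sub_zero, zero_sub, mul_one, one_mul, he, hef, hfe, hff, mw he, mw hef, mw hfe, mw hff] at h
    rw [← neg_add, neg_eq_zero] at h
    exact tA0 _ h
  have d2 : f * (φ e * f) = 0 := by
    have h := congrArg (fun z => f * z * f) E0
    simp only [mul_add, add_mul, mul_sub, sub_mul, neg_mul, mul_neg, neg_neg, mul_assoc, mul_zero, zero_mul, add_zero, zero_add, neg_zero, sub_zero, zero_sub, mul_one, one_mul, he, hef, hfe, hff, mw he, mw hef, mw hfe, mw hff] at h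
    exact tB0 _ h
  have hdece : φ e = e * (φ e * f) + f * (φ e * e) := by
    conv_lhs => rw [dec (φ e)]
    rw [d1, d2, zero_add, add_zero]
  set s := e * (φ e * f) - f * (φ e * e) with hs
  set ψ : R → R := fun x => φ x - (x * s - s * x) with hψ
  have hψadd : ∀ x y, ψ (x + y) = ψ x + ψ y := by
    intro x y; simp only [hψ, map_add]; noncomm_ring
  have hψP : ∀ U V : R, U * V = 0 → V * U = 0 →
      ψ U * V + V * ψ U + U * ψ V + ψ V * U = 0 := by
    intro U V hUV hVU
    have h0 := hP U V hUV hVU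
    have key : ψ U * V + V * ψ U + U * ψ V + ψ V * U
        = (φ U * V + V * φ U + U * φ V + φ V * U)
          - ((U * V) * s - s * (U * V) + ((V * U) * s - s * (V * U))) := by
      simp only [hψ]; noncomm_ring
    rw [key, h0, hUV, hVU]
    simp
  have hψ1 : ψ 1 = 0 := by simp [hψ, h1]
  have hψe : ψ e = 0 := by
    have hes : e * s - s * e = e * (φ e * f) + f * (φ e * e) := by
      rw [hs]
      simp only [mul_add, add_mul, mul_sub, sub_mul, neg_mul, mul_neg, neg_neg, mul_assoc, mul_zero, zero_mul, add_zero, zero_add, neg_zero, sub_zero, zero_sub, mul_one, one_mul, he, hef, hfe, hff, mw he, mw hef, mw hfe, mw hff]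
      abel
    simp only [hψ]
    rw [hes, ← hdece, sub_self]
  have final := main ψ hψadd hψP hψ1 hψe
  intro U
  have hU := final U
  have hφval : ∀ V : R, φ V = ψ V + (V * s - s * V) := by
    intro V; simp [hψ]
  rw [hφval (U*U), hφval U, hU]
  noncomm_ring
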